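/- Consider the base B₃ = ℙ¹ × ℙ² with Kähler cone generated by j₀ (hyperplane of ℙ¹) and j₁ (hyperplane of ℙ²), intersection relations j₀² = 0, j₁³ = 0, j₀·j₁² = 1. For the Kähler form J = t·j₀ + (b/√t)·j₁, a divisor S = h₀ j₀ + h j₁ with h > 0, and the curve C₀ = j₀·j₁, one has: vol(B₃) = J³/6 = b²/2; vol(C₀) = J·C₀ = b/√t → 0 as t → ∞; vol(S) = J²·S/2 = √t·bh + b²h₀/(2t); and asymptotically vol(S)·vol(C₀) → b²h = 4m·vol(B₃), where m = (1/2) C₀·S = h/2. -/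

import Mathlib

open Filter

/-- The triple intersection form of `ℙ¹ × ℙ²` in the basis `(j₀, j₁)`:
the only nonvanishing triple product is `j₀·j₁·j₁ = 1`. -/
def trip (x y z : ℝ × ℝ) : ℝ :=
  x.1 * y.2 * z.2 + y.1 * x.2 * z.2 + z.1 * x.2 * y.2

/-- Type B example on `B₃ = ℙ¹ × ℙ²` (Appendix E.2): with `J = t j₀ + (b/√t) j₁`,
`S = h₀ j₀ + h j₁`, `C₀ = j₀·j₁`, one has `vol(B₃) = b²/2`, `vol(C₀) = b/√t → 0`,
`vol(S) = √t·bh + b²h₀/(2t)`, and `vol(S)·vol(C₀) → b²h = 4m·vol(B₃)` with `m = h/2`. -/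
theorem stmt_14 (b h₀ h : ℝ) (hb : 0 < b) (hh : 0 < h) :
    (∀ t : ℝ, 0 < t →
      trip (t, b / Real.sqrt t) (t, b / Real.sqrt t) (t, b / Real.sqrt t) / 6 = b ^ 2 / 2) ∧
    (∀ t : ℝ, 0 < t →
      trip (t, b / Real.sqrt t) (1, 0) (0, 1) = b / Real.sqrt t) ∧
    Tendsto (fun t : ℝ => trip (t, b / Real.sqrt t) (1, 0) (0, 1)) atTop (nhds 0) ∧
    (∀ t : ℝ, 0 < t →
      trip (t, b / Real.sqrt t) (t, b / Real.sqrt t) (h₀, h) / 2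
        = Real.sqrt t * b * h + b ^ 2 * h₀ / (2 * t)) ∧
    Tendsto (fun t : ℝ =>
        trip (t, b / Real.sqrt t) (t, b / Real.sqrt t) (h₀, h) / 2 *
          trip (t, b / Real.sqrt t) (1, 0) (0, 1)) atTop (nhds (b ^ 2 * h)) ∧
    trip (h₀, h) (1, 0) (0, 1) / 2 = h / 2 ∧
    b ^ 2 * h = 4 * (h / 2) * (b ^ 2 / 2) := by
  have hs : ∀ t : ℝ, 0 < t → Real.sqrt t * Real.sqrt t = t := fun t ht =>
    Real.mul_self_sqrt ht.le
  have hsne : ∀ t : ℝ, 0 < t → Real.sqrt t ≠ 0 := fun t ht =>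
    ne_of_gt (Real.sqrt_pos.mpr ht)
  have hsqrtTop : Tendsto Real.sqrt atTop atTop := by
    refine tendsto_atTop_atTop.mpr fun C => ⟨max 0 C ^ 2, fun x hx => ?_⟩
    calc C ≤ max 0 C := le_max_right _ _
      _ = Real.sqrt (max 0 C ^ 2) := (Real.sqrt_sq (le_max_left _ _)).symm
      _ ≤ Real.sqrt x := Real.sqrt_le_sqrt hx
  refine ⟨?_, ?_, ?_, ?_, ?_, ?_, ?_⟩
  · intro t ht
    have h1 := hs t ht
    have h2 := hsne t ht
    simp only [trip]
    rw [← h1, Real.sqrt_mul_self (Real.sqrt_nonneg t)]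
    field_simp
    ring
  · intro t ht
    simp [trip]
  · have : Tendsto (fun t : ℝ => b * (Real.sqrt t)⁻¹) atTop (nhds (b * 0)) :=
      (hsqrtTop.inv_tendsto_atTop).const_mul b
    simp only [mul_zero] at this
    refine this.congr fun t => by simp [trip, div_eq_mul_inv]
  · intro t ht
    have h1 := hs t ht
    have h2 := hsne t ht
    simp only [trip]
    rw [← h1, Real.sqrt_mul_self (Real.sqrt_nonneg t)]
    field_simp
    linear_combination 0 * h1
  · have key : Tendsto (fun t : ℝ => b ^ 2 * h + b ^ 3 * h₀ / 2 * (t * Real.sqrt t)⁻¹)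
        atTop (nhds (b ^ 2 * h + b ^ 3 * h₀ / 2 * 0)) := by
      refine Tendsto.const_add _ (Tendsto.const_mul _ ?_)
      exact (tendsto_id.atTop_mul_atTop₀ hsqrtTop).inv_tendsto_atTop
    simp only [mul_zero, add_zero] at key
    refine key.congr' ?_
    filter_upwards [eventually_gt_atTop 0] with t ht
    have h1 := hs t ht
    have h2 := hsne t ht
    simp only [trip]
    rw [← h1, Real.sqrt_mul_self (Real.sqrt_nonneg t)]
    field_simp
    linear_combination 0 * h1
  · simp [trip]
  · ring
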